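/- Let k be an algebraically closed field with char k ≠ 2. If Θ = L₁² − L₂L₃ is a nonzero rank-≤3 quadric (L_i linear forms in the z-coordinates) vanishing on the second Veronese embedding ν₂(Pⁿ) ⊂ P^N, then there exist quadratic forms q₁,q₂,q₃ in k[x_0,…,x_n] with q₁² = q₂q₃, and consequently q₁ = l₁l₂, q₂ = c·l₁², q₃ = c^{-1}·l₂² for some linear forms l₁,l₂ and nonzero constant c; hence Θ lies in the image of the Q-map, i.e., Θ is a scalar multiple of f(l₁²)f(l₂²) − f(l₁l₂)² up to the identification. -/

import Mathlib

open MvPolynomial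

/-- Index type for the coordinates `z_I` of `P^N`: degree-2 exponent vectors
in the `n+1` variables `x₀,…,x_n`. -/
def VIdx (n : ℕ) : Type := {v : Fin (n + 1) → ℕ // ∑ i, v i = 2}

/-- The `i`-th standard basis exponent vector. -/
def ee (n : ℕ) (i : Fin (n + 1)) : Fin (n + 1) → ℕ := fun j => if j = i then 1 else 0

/-- The degree-2 exponent vector `e_i + e_j` corresponding to the monomial `x_i x_j`. -/
def pairIdx (n : ℕ) (i j : Fin (n + 1)) : VIdx n :=
  ⟨ee n i + ee n j, by simp [ee, Finset.sum_add_distrib]⟩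

/-- `f(ℓ_a · ℓ_b)`: image under the linear identification `x_i x_j ↦ z_{e_i+e_j}` of the
product of the linear forms with coefficient vectors `a` and `b`. -/
noncomputable def fprod (k : Type*) [CommRing k] (n : ℕ) (a b : Fin (n + 1) → k) :
    MvPolynomial (VIdx n) k :=
  ∑ i, ∑ j, C (a i * b j) * X (pairIdx n i j)

/-- The Q-map quadric `f(ℓ₁²)·f(ℓ₂²) − f(ℓ₁ℓ₂)²`. -/
noncomputable def Qquad (k : Type*) [CommRing k] (n : ℕ) (a b : Fin (n + 1) → k) :
    MvPolynomial (VIdx n) k :=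
  fprod k n a a * fprod k n b b - fprod k n a b ^ 2

/-- The comultiplication `ν₂^#` of the second Veronese embedding: `z_I ↦ x^I`. -/
noncomputable def ver (k : Type*) [CommRing k] (n : ℕ) (v : VIdx n) :
    MvPolynomial (Fin (n + 1)) k :=
  ∏ i, X i ^ v.1 i

/-- The linear form in `x₀,…,x_n` with coefficient vector `a`. -/
noncomputable def lin (k : Type*) [CommRing k] (n : ℕ) (a : Fin (n + 1) → k) :
    MvPolynomial (Fin (n + 1)) k :=
  ∑ i, C (a i) * X i

section AuxLemmas


theorem Phi_monomial {σ R : Type*} [CommSemiring R] (m : σ →₀ ℕ) (c : R) :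
    aeval (fun i => Polynomial.C (X i) * Polynomial.X) (monomial m c)
      = Polynomial.C (monomial m c) * Polynomial.X ^ m.degree := by
  rw [aeval_monomial, monomial_eq]
  simp only [mul_pow, Finsupp.prod, Finset.prod_mul_distrib, map_prod, map_pow, map_mul,
    Finset.prod_pow_eq_pow_sum, Finsupp.degree_apply]
  rw [show (algebraMap R (Polynomial (MvPolynomial σ R))) c = Polynomial.C (C c) from rfl]
  ring

theorem coeff_Phi {σ R : Type*} [CommSemiring R] (u : MvPolynomial σ R) (j : ℕ) :
    (aeval (fun i => Polynomial.C (X i) * Polynomial.X) u).coeff j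
      = homogeneousComponent j u := by
  conv_lhs => rw [← support_sum_monomial_coeff u]
  rw [map_sum, Polynomial.finset_sum_coeff, homogeneousComponent_apply, Finset.sum_filter]
  refine Finset.sum_congr rfl fun m hm => ?_
  rw [Phi_monomial, Polynomial.coeff_C_mul, Polynomial.coeff_X_pow, mul_ite, mul_one, mul_zero]
  by_cases h : m.degree = j
  · simp [h]
  · rw [if_neg h, if_neg (fun hj => h hj.symm)]

theorem Phi_homog {σ R : Type*} [CommSemiring R] {u : MvPolynomial σ R} {d : ℕ}
    (hu : u.IsHomogeneous d) :
    aeval (fun i => Polynomial.C (X i) * Polynomial.X) u = Polynomial.C u * Polynomial.X ^ d := by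
  conv_lhs => rw [← support_sum_monomial_coeff u]
  rw [map_sum]
  have : ∀ m ∈ u.support, aeval (fun i => Polynomial.C (X i) * Polynomial.X)
      (monomial m (coeff m u)) = Polynomial.C (monomial m (coeff m u)) * Polynomial.X ^ d := by
    intro m hm
    rw [Phi_monomial]
    congr 2
    rw [Finsupp.degree_eq_weight_one]
    exact hu (mem_support_iff.mp hm)
  rw [Finset.sum_congr rfl this, ← Finset.sum_mul, ← map_sum, support_sum_monomial_coeff]

theorem mono_factor {R : Type*} [CommRing R] [IsDomain R] :
    ∀ (d : ℕ) (P Q : Polynomial R) (a : R), a ≠ 0 → P * Q = Polynomial.C a * Polynomial.X ^ d →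
      ∃ (i : ℕ) (b : R), P = Polynomial.C b * Polynomial.X ^ i := by
  intro d
  induction d with
  | zero =>
    intro P Q a ha h
    rw [pow_zero, mul_one] at h
    refine ⟨0, P.coeff 0, ?_⟩
    rw [pow_zero, mul_one]
    have hP : P.natDegree = 0 := by
      have := Polynomial.natDegree_mul (p := P) (q := Q) ?_ ?_
      · rw [h, Polynomial.natDegree_C] at this; omega
      · rintro rfl; rw [zero_mul] at h; exact ha (by simpa using (congrArg (Polynomial.coeff · 0) h.symm))
      · rintro rfl; rw [mul_zero] at h; exact ha (by simpa using (congrArg (Polynomial.coeff · 0) h.symm))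
    exact (Polynomial.eq_C_of_natDegree_eq_zero hP)
  | succ d ih =>
    intro P Q a ha h
    have hX : (Polynomial.X : Polynomial R) ∣ P * Q := by
      rw [h]; exact Dvd.dvd.mul_left (dvd_pow_self _ d.succ_ne_zero) _
    rcases (Polynomial.prime_X (R := R)).2.2 _ _ hX with hP | hQ
    · obtain ⟨P', rfl⟩ := hP
      have h' : P' * Q = Polynomial.C a * Polynomial.X ^ d := by
        apply mul_left_cancel₀ (Polynomial.X_ne_zero (R := R))
        linear_combination h
      obtain ⟨i, b, hb⟩ := ih P' Q a ha h'
      exact ⟨i + 1, b, by rw [hb, pow_succ]; ring⟩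
    · obtain ⟨Q', rfl⟩ := hQ
      have h' : P * Q' = Polynomial.C a * Polynomial.X ^ d := by
        apply mul_left_cancel₀ (Polynomial.X_ne_zero (R := R))
        linear_combination h
      exact ih P Q' a ha h'

/-- Factors of a nonzero homogeneous polynomial over a domain are homogeneous. -/
theorem homog_factor {σ R : Type*} [CommRing R] [IsDomain R] {u v : MvPolynomial σ R} {d : ℕ}
    (h : (u * v).IsHomogeneous d) (hne : u * v ≠ 0) :
    ∃ a b : ℕ, a + b = d ∧ u.IsHomogeneous a ∧ v.IsHomogeneous b := by
  have hu0 : u ≠ 0 := fun h0 => hne (by rw [h0, zero_mul])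
  have hv0 : v ≠ 0 := fun h0 => hne (by rw [h0, mul_zero])
  set Φ : MvPolynomial σ R →ₐ[R] Polynomial (MvPolynomial σ R) :=
    aeval (fun i => Polynomial.C (X i) * Polynomial.X) with hΦ
  have key : ∀ w : MvPolynomial σ R, w ≠ 0 →
      (∃ i b, Φ w = Polynomial.C b * Polynomial.X ^ i) → ∃ a, w.IsHomogeneous a := by
    intro w hw ⟨i, b, hib⟩
    refine ⟨i, fun m hm => ?_⟩
    rw [show (Finsupp.weight 1 : (σ →₀ ℕ) →+ ℕ) = Finsupp.degree from (Finsupp.degree_eq_weight_one).symm]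
    by_contra hdeg
    have h1 : coeff m (homogeneousComponent m.degree w) = coeff m w := by
      rw [coeff_homogeneousComponent, if_pos rfl]
    have h2 : homogeneousComponent m.degree w = 0 := by
      have := coeff_Phi (R := R) w m.degree
      rw [hib, Polynomial.coeff_C_mul, Polynomial.coeff_X_pow] at this
      rw [← this, if_neg (fun hh : m.degree = i => hdeg hh), mul_zero]
    rw [h2] at h1
    exact hm h1.symm
  have hfact : Φ u * Φ v = Polynomial.C (u * v) * Polynomial.X ^ d := by
    rw [← map_mul]; exact Phi_homog h
  obtain ⟨au, hu⟩ := key u hu0 (mono_factor d (Φ u) (Φ v) (u * v) hne hfact)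
  obtain ⟨av, hv⟩ := key v hv0 (mono_factor d (Φ v) (Φ u) (u * v) hne (by rw [mul_comm]; exact hfact))
  exact ⟨au, av, (hu.mul hv).inj_right h hne, hu, hv⟩

theorem homog0_eq_C {σ R : Type*} [CommSemiring R] {p : MvPolynomial σ R}
    (hp : p.IsHomogeneous 0) : p = C (coeff 0 p) := by
  classical
  ext m
  by_cases hm : m = 0
  · subst hm; simp
  · rw [coeff_C, if_neg (fun h => hm h.symm)]
    by_contra hc
    exact hm (Finsupp.degree_eq_zero_iff m |>.mp (by rw [Finsupp.degree_eq_weight_one]; exact hp hc))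

theorem deg1_single {σ : Type*} {d : σ →₀ ℕ} (h : d.degree = 1) :
    ∃ i, d = Finsupp.single i 1 := by
  classical
  have hd0 : d ≠ 0 := fun h0 => by simp [h0, map_zero] at h
  obtain ⟨i, hi⟩ := Finsupp.support_nonempty_iff.mpr hd0
  have hmem := hi
  rw [Finsupp.mem_support_iff] at hmem
  have hsum : d i + ∑ j ∈ d.support.erase i, d j = 1 := by
    rw [Finset.add_sum_erase _ _ hi]; exact h
  have hdi : d i = 1 := by omega
  have hrest : ∑ j ∈ d.support.erase i, d j = 0 := by omega
  refine ⟨i, ?_⟩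
  ext j
  by_cases hj : j = i
  · subst hj; simp [hdi]
  · rw [Finsupp.single_apply, if_neg (fun hh => hj hh.symm)]
    by_contra hc
    have hjs : j ∈ d.support.erase i := Finset.mem_erase.mpr ⟨hj, Finsupp.mem_support_iff.mpr hc⟩
    have := Finset.sum_eq_zero_iff.mp hrest j hjs
    exact hc this


end AuxLemmas

noncomputable section VerLemmas
variable {k : Type*} [Field k] {n : ℕ}

noncomputable instance (n : ℕ) : DecidableEq (VIdx n) := Classical.decEq _

/-- exponent finsupp of an index -/
def vhat {n : ℕ} (v : VIdx n) : Fin (n + 1) →₀ ℕ := Finsupp.equivFunOnFinite.symm v.1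

lemma vhat_inj {n : ℕ} : Function.Injective (vhat (n := n)) := fun v w h => by
  have := Finsupp.equivFunOnFinite.symm.injective h
  exact Subtype.ext this

lemma vhat_degree {n : ℕ} (v : VIdx n) : (vhat v).degree = 2 := by
  classical
  rw [Finsupp.degree_eq_weight_one]
  have : ∀ i, (vhat v) i = v.1 i := fun i => rfl
  rw [Finsupp.weight_apply, Finsupp.sum_fintype]
  · simpa [this] using v.2
  · intro i; simp

lemma ver_monomial (v : VIdx n) : ver k n v = monomial (vhat v) 1 := by
  rw [monomial_eq, map_one, one_mul, ver, Finsupp.prod_fintype]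
  · rfl
  · intro i; exact pow_zero _

lemma coeff_vhat_aeval_monomial (v : VIdx n) {d : VIdx n →₀ ℕ} (hd : d.degree = 1) (c : k) :
    coeff (vhat v) (aeval (ver k n) (monomial d c))
      = if d = Finsupp.single v 1 then c else 0 := by
  classical
  obtain ⟨w, rfl⟩ := deg1_single hd
  rw [aeval_monomial]
  rw [Finsupp.prod_single_index]
  swap
  · exact pow_zero _
  rw [pow_one, ver_monomial]
  have : (algebraMap k (MvPolynomial (Fin (n + 1)) k)) c * monomial (vhat w) 1
      = monomial (vhat w) c := by
    rw [algebraMap_eq, C_mul_monomial, mul_one]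
  rw [this, coeff_monomial]
  by_cases hwv : w = v
  · subst hwv; simp
  · rw [if_neg (fun h => hwv (vhat_inj h)), if_neg]
    intro h
    exact hwv ((Finsupp.single_left_inj one_ne_zero).mp h)

lemma coeff_vhat_aeval {L : MvPolynomial (VIdx n) k} (hL : L.IsHomogeneous 1) (v : VIdx n) :
    coeff (vhat v) (aeval (ver k n) L) = coeff (Finsupp.single v 1) L := by
  classical
  conv_lhs => rw [← support_sum_monomial_coeff L]
  rw [map_sum, MvPolynomial.coeff_sum]
  have : ∀ d ∈ L.support, coeff (vhat v) (aeval (ver k n) (monomial d (coeff d L)))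
      = if d = Finsupp.single v 1 then coeff d L else 0 := by
    intro d hd
    exact coeff_vhat_aeval_monomial v
      (by rw [Finsupp.degree_eq_weight_one]; exact hL (mem_support_iff.mp hd)) _
  rw [Finset.sum_congr rfl this, Finset.sum_ite_eq' L.support (Finsupp.single v 1)
    (fun d => coeff d L)]
  by_cases hmem : Finsupp.single v 1 ∈ L.support
  · rw [if_pos hmem]
  · rw [if_neg hmem, eq_comm]
    exact notMem_support_iff.mp hmem

lemma ver_ker {L : MvPolynomial (VIdx n) k} (hL : L.IsHomogeneous 1)
    (h : aeval (ver k n) L = 0) : L = 0 := by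
  ext d
  rw [coeff_zero]
  by_contra hc
  have hdeg : d.degree = 1 := by rw [Finsupp.degree_eq_weight_one]; exact hL hc
  obtain ⟨v, rfl⟩ := deg1_single hdeg
  have := coeff_vhat_aeval hL v
  rw [h, coeff_zero] at this
  exact hc this.symm

lemma ver_inj {L M : MvPolynomial (VIdx n) k} (hL : L.IsHomogeneous 1) (hM : M.IsHomogeneous 1)
    (h : aeval (ver k n) L = aeval (ver k n) M) : L = M := by
  have := ver_ker (hL.sub hM) (by rw [map_sub, h, sub_self])
  exact sub_eq_zero.mp this

lemma ver_homog' (v : VIdx n) : (ver k n v).IsHomogeneous 2 := by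
  have h := IsHomogeneous.prod Finset.univ (fun i => (X i : MvPolynomial (Fin (n+1)) k) ^ v.1 i)
    (fun i => v.1 i) (fun i _ => isHomogeneous_X_pow i (v.1 i))
  rw [ver]
  rw [v.2] at h
  exact h

lemma ver_homog {L : MvPolynomial (VIdx n) k} (hL : L.IsHomogeneous 1) :
    (aeval (ver k n) L).IsHomogeneous 2 := by
  simpa using hL.aeval (ver k n) ver_homog'

lemma exists_lin {p : MvPolynomial (Fin (n + 1)) k} (hp : p.IsHomogeneous 1) :
    ∃ a : Fin (n + 1) → k, p = lin k n a := by
  classical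
  refine ⟨fun i => coeff (Finsupp.single i 1) p, ?_⟩
  ext d
  rw [lin, MvPolynomial.coeff_sum]
  simp only [coeff_C_mul, MvPolynomial.coeff_X', mul_ite, mul_one, mul_zero]
  by_cases hd : ∃ i, d = Finsupp.single i 1
  · obtain ⟨i, rfl⟩ := hd
    rw [Finset.sum_eq_single i]
    · rw [if_pos rfl]
    · intro j _ hji
      rw [if_neg (fun h => hji ((Finsupp.single_left_inj one_ne_zero).mp h))]
    · intro h; exact absurd (Finset.mem_univ i) h
  · rw [Finset.sum_eq_zero (fun j _ => if_neg (fun h => hd ⟨j, h.symm⟩))]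
    by_contra hc
    have : d.degree = 1 := by rw [Finsupp.degree_eq_weight_one]; exact hp hc
    obtain ⟨i, rfl⟩ := deg1_single this
    exact hd ⟨i, rfl⟩

lemma ver_pairIdx (i j : Fin (n + 1)) : ver k n (pairIdx n i j) = X i * X j := by
  classical
  rw [ver]
  have : ∀ t, (pairIdx n i j).1 t = (if t = i then 1 else 0) + (if t = j then 1 else 0) :=
    fun t => rfl
  simp only [this, pow_add]
  rw [Finset.prod_mul_distrib]
  congr 1
  · rw [Finset.prod_eq_single i] <;> simp +contextual
  · rw [Finset.prod_eq_single j] <;> simp +contextual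

lemma aeval_fprod (a b : Fin (n + 1) → k) :
    aeval (ver k n) (fprod k n a b) = lin k n a * lin k n b := by
  rw [fprod, lin, lin, Finset.sum_mul_sum]
  rw [map_sum]
  refine Finset.sum_congr rfl fun i _ => ?_
  rw [map_sum]
  refine Finset.sum_congr rfl fun j _ => ?_
  rw [map_mul, aeval_C, aeval_X, ver_pairIdx, algebraMap_eq, map_mul]
  ring

lemma fprod_homog (a b : Fin (n + 1) → k) : (fprod k n a b).IsHomogeneous 1 :=
  IsHomogeneous.sum _ _ _ fun i _ => IsHomogeneous.sum _ _ _ fun j _ =>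
    isHomogeneous_C_mul_X _ _

lemma homog_unit_iff {σ : Type*} {p : MvPolynomial σ k} {d : ℕ} (hp : p.IsHomogeneous d)
    (hne : p ≠ 0) : IsUnit p ↔ d = 0 := by
  constructor
  · intro ⟨u, hu⟩
    obtain ⟨w, hw⟩ := isUnit_iff_exists_inv.mp ⟨u, hu⟩
    obtain ⟨a', b', hab, ha, hb⟩ := homog_factor (u := p) (v := w)
      (by rw [hw]; exact isHomogeneous_one _ _) (by rw [hw]; exact one_ne_zero)
    have := ha.inj_right hp hne
    omega
  · intro h
    subst h
    rw [homog0_eq_C hp]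
    have : coeff 0 p ≠ 0 := fun h0 => hne (by rw [homog0_eq_C hp, h0, map_zero])
    exact (isUnit_iff_ne_zero.mpr this).map C

lemma homog1_prime {p : MvPolynomial (Fin (n + 1)) k} (hp : p.IsHomogeneous 1) (hne : p ≠ 0) :
    Prime p := by
  rw [← UniqueFactorizationMonoid.irreducible_iff_prime]
  constructor
  · rw [homog_unit_iff hp hne]; omega
  · intro u v huv
    have h1 : (u * v).IsHomogeneous 1 := by rw [← huv]; exact hp
    obtain ⟨a', b', hab, ha, hb⟩ := homog_factor h1 (by rw [← huv]; exact hne)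
    have hu0 : u ≠ 0 := fun h0 => hne (by rw [huv, h0, zero_mul])
    have hv0 : v ≠ 0 := fun h0 => hne (by rw [huv, h0, mul_zero])
    rcases Nat.eq_zero_or_pos a' with h0 | h0
    · left; rw [homog_unit_iff ha hu0]; exact h0
    · right; rw [homog_unit_iff hb hv0]; omega

end VerLemmas

/-- If `Θ = L₁² − L₂L₃` is a nonzero rank-`≤3` quadric vanishing on `ν₂(Pⁿ)`, then the
quadratic forms `qᵢ = ν₂^#(Lᵢ)` satisfy `q₁² = q₂q₃`, and there are linear forms `l₁, l₂`
and a nonzero constant `c` with `q₁ = l₁l₂`, `q₂ = c·l₁²`, `q₃ = c⁻¹·l₂²`; hence `Θ` is a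
(nonzero) scalar multiple of the Q-map quadric `f(l₁²)f(l₂²) − f(l₁l₂)²`. -/
theorem stmt_15 {k : Type*} [Field k] [IsAlgClosed k] (hchar : ringChar k ≠ 2) (n : ℕ)
    (L₁ L₂ L₃ : MvPolynomial (VIdx n) k)
    (hL₁ : L₁.IsHomogeneous 1) (hL₂ : L₂.IsHomogeneous 1) (hL₃ : L₃.IsHomogeneous 1)
    (hne : L₁ ^ 2 - L₂ * L₃ ≠ 0)
    (hvan : aeval (ver k n) (L₁ ^ 2 - L₂ * L₃) = 0) :
    (aeval (ver k n) L₁) ^ 2 = aeval (ver k n) L₂ * aeval (ver k n) L₃ ∧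
    ∃ (a b : Fin (n + 1) → k) (c μ : k), c ≠ 0 ∧ μ ≠ 0 ∧
      aeval (ver k n) L₁ = lin k n a * lin k n b ∧
      aeval (ver k n) L₂ = c • (lin k n a) ^ 2 ∧
      aeval (ver k n) L₃ = c⁻¹ • (lin k n b) ^ 2 ∧
      L₁ ^ 2 - L₂ * L₃ = μ • Qquad k n a b := by
  rw [map_sub, map_mul, map_pow] at hvan
  set q₁ := aeval (ver k n) L₁ with hq₁def
  set q₂ := aeval (ver k n) L₂ with hq₂def
  set q₃ := aeval (ver k n) L₃ with hq₃def
  have hq : q₁ ^ 2 = q₂ * q₃ := sub_eq_zero.mp hvan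
  refine ⟨hq, ?_⟩
  -- nonvanishing
  have hq₁0 : q₁ ≠ 0 := by
    intro h0
    have hL10 : L₁ = 0 := ver_ker hL₁ h0
    have h23 : q₂ * q₃ = 0 := by rw [← hq, h0]; ring
    rcases mul_eq_zero.mp h23 with h2 | h3
    · exact hne (by rw [ver_ker hL₂ h2, hL10]; ring)
    · exact hne (by rw [ver_ker hL₃ h3, hL10]; ring)
  have hq₂0 : q₂ ≠ 0 := by
    intro h0; exact hq₁0 (pow_eq_zero_iff two_ne_zero |>.mp (by rw [hq, h0, zero_mul]))
  have hq₃0 : q₃ ≠ 0 := by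
    intro h0; exact hq₁0 (pow_eq_zero_iff two_ne_zero |>.mp (by rw [hq, h0, mul_zero]))
  have hq₁h : q₁.IsHomogeneous 2 := ver_homog hL₁
  have hq₂h : q₂.IsHomogeneous 2 := ver_homog hL₂
  have hq₃h : q₃.IsHomogeneous 2 := ver_homog hL₃
  -- proportionality contradictions
  have contra2 : ∀ c : k, c ≠ 0 → q₂ = C c * q₁ → False := by
    intro c hc h2
    have h3 : q₁ = C c * q₃ := by
      apply mul_left_cancel₀ hq₁0
      rw [show q₁ * q₁ = q₁ ^ 2 by ring, hq, h2]; ring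
    have e2 : L₂ = C c * L₁ :=
      ver_inj hL₂ (hL₁.C_mul c) (by rw [map_mul, aeval_C, algebraMap_eq, ← hq₁def, ← hq₂def, h2])
    have e1 : L₁ = C c * L₃ :=
      ver_inj hL₁ (hL₃.C_mul c) (by rw [map_mul, aeval_C, algebraMap_eq, ← hq₁def, ← hq₃def, h3])
    apply hne
    calc L₁ ^ 2 - L₂ * L₃ = L₁ ^ 2 - L₁ * (C c * L₃) := by rw [e2]; ring
    _ = 0 := by rw [← e1]; ring
  have contra3 : ∀ c : k, c ≠ 0 → q₃ = C c * q₁ → False := by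
    intro c hc h3
    have h2 : q₁ = C c * q₂ := by
      apply mul_left_cancel₀ hq₁0
      rw [show q₁ * q₁ = q₁ ^ 2 by ring, hq, h3]; ring
    have e3 : L₃ = C c * L₁ :=
      ver_inj hL₃ (hL₁.C_mul c) (by rw [map_mul, aeval_C, algebraMap_eq, ← hq₁def, ← hq₃def, h3])
    have e1 : L₁ = C c * L₂ :=
      ver_inj hL₁ (hL₂.C_mul c) (by rw [map_mul, aeval_C, algebraMap_eq, ← hq₁def, ← hq₂def, h2])
    apply hne
    calc L₁ ^ 2 - L₂ * L₃ = L₁ ^ 2 - L₁ * (C c * L₂) := by rw [e3]; ring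
    _ = 0 := by rw [← e1]; ring
  -- main-case finisher
  have main : ∀ (F G : MvPolynomial (Fin (n + 1)) k) (av bv : Fin (n + 1) → k) (c : k),
      c ≠ 0 → F = lin k n av → G = lin k n bv → q₁ = F * G → q₂ = C c * F ^ 2 →
      q₃ = C c⁻¹ * G ^ 2 →
      ∃ (a b : Fin (n + 1) → k) (c μ : k), c ≠ 0 ∧ μ ≠ 0 ∧
        q₁ = lin k n a * lin k n b ∧ q₂ = c • (lin k n a) ^ 2 ∧
        q₃ = c⁻¹ • (lin k n b) ^ 2 ∧ L₁ ^ 2 - L₂ * L₃ = μ • Qquad k n a b := by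
    intro F G av bv c hc hFa hGb h1 h2 h3
    have hcc : (C c : MvPolynomial (VIdx n) k) * C c⁻¹ = 1 := by
      rw [← map_mul, mul_inv_cancel₀ hc, map_one]
    have hF1 : L₁ = fprod k n av bv :=
      ver_inj hL₁ (fprod_homog av bv) (by rw [aeval_fprod, ← hq₁def, h1, hFa, hGb])
    have hF2 : L₂ = C c * fprod k n av av :=
      ver_inj hL₂ ((fprod_homog av av).C_mul c)
        (by rw [map_mul, aeval_C, algebraMap_eq, aeval_fprod, ← hq₂def, h2, hFa]; ring)
    have hF3 : L₃ = C c⁻¹ * fprod k n bv bv :=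
      ver_inj hL₃ ((fprod_homog bv bv).C_mul c⁻¹)
        (by rw [map_mul, aeval_C, algebraMap_eq, aeval_fprod, ← hq₃def, h3, hGb]; ring)
    refine ⟨av, bv, c, -1, hc, by norm_num, by rw [h1, hFa, hGb],
      by rw [h2, hFa, smul_eq_C_mul], by rw [h3, hGb, smul_eq_C_mul], ?_⟩
    rw [hF1, hF2, hF3, Qquad, smul_eq_C_mul, map_neg, map_one]
    linear_combination (-(fprod k n av av * fprod k n bv bv)) * hcc
  by_cases hirr : Irreducible q₁
  · -- irreducible case: contradiction
    exfalso
    have hprime : Prime q₁ := UniqueFactorizationMonoid.irreducible_iff_prime.mp hirr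
    have hdvd : q₁ ∣ q₂ * q₃ := ⟨q₁, by rw [← hq]; ring⟩
    rcases hprime.2.2 _ _ hdvd with h2 | h3
    · obtain ⟨u, hu⟩ := h2
      obtain ⟨a', b', hab, ha, hb⟩ :=
        homog_factor (by rw [← hu]; exact hq₂h) (by rw [← hu]; exact hq₂0)
      have ha2 : a' = 2 := ha.inj_right hq₁h hq₁0
      have hb0 : b' = 0 := by omega
      subst hb0
      have hu0 : u ≠ 0 := fun h0 => hq₂0 (by rw [hu, h0, mul_zero])
      obtain ⟨c, hCu⟩ : ∃ c, u = C c := ⟨_, homog0_eq_C hb⟩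
      have hc0 : c ≠ 0 := fun h0 => hu0 (by rw [hCu, h0, map_zero])
      exact contra2 _ hc0 (by rw [hu, hCu]; ring)
    · obtain ⟨u, hu⟩ := h3
      obtain ⟨a', b', hab, ha, hb⟩ :=
        homog_factor (by rw [← hu]; exact hq₃h) (by rw [← hu]; exact hq₃0)
      have ha2 : a' = 2 := ha.inj_right hq₁h hq₁0
      have hb0 : b' = 0 := by omega
      subst hb0
      have hu0 : u ≠ 0 := fun h0 => hq₃0 (by rw [hu, h0, mul_zero])
      obtain ⟨c, hCu⟩ : ∃ c, u = C c := ⟨_, homog0_eq_C hb⟩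
      have hc0 : c ≠ 0 := fun h0 => hu0 (by rw [hCu, h0, map_zero])
      exact contra3 _ hc0 (by rw [hu, hCu]; ring)
  · -- reducible case
    have hq₁u : ¬IsUnit q₁ := by rw [homog_unit_iff hq₁h hq₁0]; omega
    rw [irreducible_iff] at hirr
    push_neg at hirr
    obtain ⟨f, g, hfg, hfU, hgU⟩ := hirr hq₁u
    have hf0 : f ≠ 0 := fun h0 => hq₁0 (by rw [hfg, h0, zero_mul])
    have hg0 : g ≠ 0 := fun h0 => hq₁0 (by rw [hfg, h0, mul_zero])
    obtain ⟨af, bg, habfg, haf, hbg⟩ :=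
      homog_factor (by rw [← hfg]; exact hq₁h) (by rw [← hfg]; exact hq₁0)
    have haf1 : af = 1 := by
      rcases Nat.lt_or_ge af 1 with h | h
      · exfalso; exact hfU ((homog_unit_iff haf hf0).mpr (by omega))
      · rcases Nat.lt_or_ge bg 1 with h' | h'
        · exfalso; exact hgU ((homog_unit_iff hbg hg0).mpr (by omega))
        · omega
    have hbg1 : bg = 1 := by omega
    subst haf1; subst hbg1
    obtain ⟨av, hfa⟩ := exists_lin haf
    obtain ⟨bv, hgb⟩ := exists_lin hbg
    have fprime : Prime f := homog1_prime haf hf0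
    have gprime : Prime g := homog1_prime hbg hg0
    have hfdvd : f ∣ q₂ * q₃ := ⟨f * g * g, by rw [← hq, hfg]; ring⟩
    rcases fprime.2.2 _ _ hfdvd with hf2 | hf3
    · -- f ∣ q₂
      obtain ⟨r, hr⟩ := hf2
      have hr0 : r ≠ 0 := fun h0 => hq₂0 (by rw [hr, h0, mul_zero])
      have hrh : r.IsHomogeneous 1 := by
        obtain ⟨ar, br, habr, har, hbr⟩ :=
          homog_factor (by rw [← hr]; exact hq₂h) (by rw [← hr]; exact hq₂0)
        have : ar = 1 := har.inj_right haf hf0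
        have : br = 1 := by omega
        exact this ▸ hbr
      have key : f * (g * g) = r * q₃ := by
        apply mul_left_cancel₀ hf0
        rw [show f * (f * (g * g)) = (f * g) ^ 2 by ring, ← hfg, hq, hr]; ring
      have hgdvd : g ∣ r * q₃ := ⟨f * g, by rw [← key]; ring⟩
      rcases gprime.2.2 _ _ hgdvd with hgr | hg3
      · -- g ∣ r : proportional, contradiction
        exfalso
        obtain ⟨s, hs⟩ := hgr
        have hs0 : s ≠ 0 := fun h0 => hr0 (by rw [hs, h0, mul_zero])
        have hsh : s.IsHomogeneous 0 := by
          obtain ⟨as', bs, habs, has, hbs⟩ :=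
            homog_factor (by rw [← hs]; exact hrh) (by rw [← hs]; exact hr0)
          have : as' = 1 := has.inj_right hbg hg0
          have : bs = 0 := by omega
          exact this ▸ hbs
        obtain ⟨c, hCs⟩ : ∃ c, s = C c := ⟨_, homog0_eq_C hsh⟩
        have hc0 : c ≠ 0 := fun h0 => hs0 (by rw [hCs, h0, map_zero])
        exact contra2 _ hc0 (by rw [hr, hs, hCs, hfg]; ring)
      · -- g ∣ q₃
        obtain ⟨t, ht⟩ := hg3
        have ht0 : t ≠ 0 := fun h0 => hq₃0 (by rw [ht, h0, mul_zero])
        have hth : t.IsHomogeneous 1 := by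
          obtain ⟨at', bt, habt, hat, hbt⟩ :=
            homog_factor (by rw [← ht]; exact hq₃h) (by rw [← ht]; exact hq₃0)
          have : at' = 1 := hat.inj_right hbg hg0
          have : bt = 1 := by omega
          exact this ▸ hbt
        have key2 : f * g = r * t := by
          apply mul_left_cancel₀ hg0
          rw [show g * (f * g) = f * (g * g) by ring, key, ht]; ring
        rcases fprime.2.2 r t ⟨g, key2.symm⟩ with hfr | hft
        · -- f ∣ r : MAIN CASE
          obtain ⟨s, hs⟩ := hfr
          have hr0' : r ≠ 0 := hr0
          have hs0 : s ≠ 0 := fun h0 => hr0 (by rw [hs, h0, mul_zero])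
          have hsh : s.IsHomogeneous 0 := by
            obtain ⟨as', bs, habs, has, hbs⟩ :=
              homog_factor (by rw [← hs]; exact hrh) (by rw [← hs]; exact hr0)
            have : as' = 1 := has.inj_right haf hf0
            have : bs = 0 := by omega
            exact this ▸ hbs
          obtain ⟨c, hCs⟩ : ∃ c, s = C c := ⟨_, homog0_eq_C hsh⟩
          have hc0 : c ≠ 0 := fun h0 => hs0 (by rw [hCs, h0, map_zero])
          have hteq : t = C c⁻¹ * g := by
            have hgct : g = C c * t := by
              apply mul_left_cancel₀ hf0
              rw [show f * (C c * t) = (f * C c) * t by ring, show f * C c = r by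
                rw [hs, hCs], ← key2]
            rw [hgct, ← mul_assoc, ← map_mul, inv_mul_cancel₀ hc0, map_one, one_mul]
          exact main f g av bv c hc0 hfa hgb hfg
            (by rw [hr, hs, hCs]; ring) (by rw [ht, hteq]; ring)
        · -- f ∣ t : proportional, contradiction
          exfalso
          obtain ⟨s, hs⟩ := hft
          have hs0 : s ≠ 0 := fun h0 => ht0 (by rw [hs, h0, mul_zero])
          have hsh : s.IsHomogeneous 0 := by
            obtain ⟨as', bs, habs, has, hbs⟩ :=
              homog_factor (by rw [← hs]; exact hth) (by rw [← hs]; exact ht0)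
            have : as' = 1 := has.inj_right haf hf0
            have : bs = 0 := by omega
            exact this ▸ hbs
          obtain ⟨c, hCs⟩ : ∃ c, s = C c := ⟨_, homog0_eq_C hsh⟩
          have hc0 : c ≠ 0 := fun h0 => hs0 (by rw [hCs, h0, map_zero])
          exact contra3 _ hc0 (by rw [ht, hs, hCs, hfg]; ring)
    · -- f ∣ q₃ : symmetric branch
      obtain ⟨r, hr⟩ := hf3
      have hr0 : r ≠ 0 := fun h0 => hq₃0 (by rw [hr, h0, mul_zero])
      have hrh : r.IsHomogeneous 1 := by
        obtain ⟨ar, br, habr, har, hbr⟩ :=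
          homog_factor (by rw [← hr]; exact hq₃h) (by rw [← hr]; exact hq₃0)
        have : ar = 1 := har.inj_right haf hf0
        have : br = 1 := by omega
        exact this ▸ hbr
      have key : f * (g * g) = r * q₂ := by
        apply mul_left_cancel₀ hf0
        rw [show f * (f * (g * g)) = (f * g) ^ 2 by ring, ← hfg, hq, hr]; ring
      have hgdvd : g ∣ r * q₂ := ⟨f * g, by rw [← key]; ring⟩
      rcases gprime.2.2 _ _ hgdvd with hgr | hg2
      · -- g ∣ r : proportional, contradiction
        exfalso
        obtain ⟨s, hs⟩ := hgr
        have hs0 : s ≠ 0 := fun h0 => hr0 (by rw [hs, h0, mul_zero])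
        have hsh : s.IsHomogeneous 0 := by
          obtain ⟨as', bs, habs, has, hbs⟩ :=
            homog_factor (by rw [← hs]; exact hrh) (by rw [← hs]; exact hr0)
          have : as' = 1 := has.inj_right hbg hg0
          have : bs = 0 := by omega
          exact this ▸ hbs
        obtain ⟨c, hCs⟩ : ∃ c, s = C c := ⟨_, homog0_eq_C hsh⟩
        have hc0 : c ≠ 0 := fun h0 => hs0 (by rw [hCs, h0, map_zero])
        exact contra3 _ hc0 (by rw [hr, hs, hCs, hfg]; ring)
      · -- g ∣ q₂
        obtain ⟨t, ht⟩ := hg2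
        have ht0 : t ≠ 0 := fun h0 => hq₂0 (by rw [ht, h0, mul_zero])
        have hth : t.IsHomogeneous 1 := by
          obtain ⟨at', bt, habt, hat, hbt⟩ :=
            homog_factor (by rw [← ht]; exact hq₂h) (by rw [← ht]; exact hq₂0)
          have : at' = 1 := hat.inj_right hbg hg0
          have : bt = 1 := by omega
          exact this ▸ hbt
        have key2 : f * g = r * t := by
          apply mul_left_cancel₀ hg0
          rw [show g * (f * g) = f * (g * g) by ring, key, ht]; ring
        rcases fprime.2.2 r t ⟨g, key2.symm⟩ with hfr | hft
        · -- f ∣ r : MAIN CASE (swapped)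
          obtain ⟨s, hs⟩ := hfr
          have hs0 : s ≠ 0 := fun h0 => hr0 (by rw [hs, h0, mul_zero])
          have hsh : s.IsHomogeneous 0 := by
            obtain ⟨as', bs, habs, has, hbs⟩ :=
              homog_factor (by rw [← hs]; exact hrh) (by rw [← hs]; exact hr0)
            have : as' = 1 := has.inj_right haf hf0
            have : bs = 0 := by omega
            exact this ▸ hbs
          obtain ⟨c, hCs⟩ : ∃ c, s = C c := ⟨_, homog0_eq_C hsh⟩
          have hc0 : c ≠ 0 := fun h0 => hs0 (by rw [hCs, h0, map_zero])
          have hteq : t = C c⁻¹ * g := by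
            have hgct : g = C c * t := by
              apply mul_left_cancel₀ hf0
              rw [show f * (C c * t) = (f * C c) * t by ring, show f * C c = r by
                rw [hs, hCs], ← key2]
            rw [hgct, ← mul_assoc, ← map_mul, inv_mul_cancel₀ hc0, map_one, one_mul]
          exact main g f bv av c⁻¹ (inv_ne_zero hc0) hgb hfa (by rw [hfg]; ring)
            (by rw [ht, hteq]; ring) (by rw [inv_inv, hr, hs, hCs]; ring)
        · -- f ∣ t : proportional, contradiction
          exfalso
          obtain ⟨s, hs⟩ := hft
          have hs0 : s ≠ 0 := fun h0 => ht0 (by rw [hs, h0, mul_zero])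
          have hsh : s.IsHomogeneous 0 := by
            obtain ⟨as', bs, habs, has, hbs⟩ :=
              homog_factor (by rw [← hs]; exact hth) (by rw [← hs]; exact ht0)
            have : as' = 1 := has.inj_right haf hf0
            have : bs = 0 := by omega
            exact this ▸ hbs
          obtain ⟨c, hCs⟩ : ∃ c, s = C c := ⟨_, homog0_eq_C hsh⟩
          have hc0 : c ≠ 0 := fun h0 => hs0 (by rw [hCs, h0, map_zero])
          exact contra2 _ hc0 (by rw [ht, hs, hCs, hfg]; ring)
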